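/- Let k be a field, H a commutative Hopf algebra over k, A a right H-comodule algebra with structure map ρ : A → A ⊗_k H, and B := A^{coH}. Suppose that A admits a total integral φ : H → A and that the canonical map can : A ⊗_B A → A ⊗_k H, a ⊗ a' ↦ (a ⊗ 1)·ρ(a') = Σ a·a'₍₀₎ ⊗ a'₍₁₎, is surjective. Then for every (A,H)-Hopf module N, the evaluation map N^{coH} ⊗_B A → N, n ⊗ a ↦ n·a, is an isomorphism. -/

import Mathlib

open TensorProduct

/-- The coinvariant subalgebra `B = A^{coH} = {a ∈ A : ρ a = a ⊗ 1}` of a right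
`H`-comodule algebra `A`. -/
def coinvariants (k H A : Type*) [Field k] [CommRing H] [HopfAlgebra k H]
    [CommRing A] [Algebra k A] (ρ : A →ₐ[k] A ⊗[k] H) : Subalgebra k A where
  carrier := {a | ρ a = a ⊗ₜ[k] 1}
  mul_mem' := by
    intro a b ha hb
    simp only [Set.mem_setOf_eq] at *
    rw [map_mul, ha, hb, Algebra.TensorProduct.tmul_mul_tmul, mul_one]
  one_mem' := by
    simp only [Set.mem_setOf_eq, map_one, Algebra.TensorProduct.one_def]
  add_mem' := by
    intro a b ha hb
    simp only [Set.mem_setOf_eq] at *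
    rw [map_add, ha, hb, TensorProduct.add_tmul]
  algebraMap_mem' := fun c => by
    simp only [Set.mem_setOf_eq, AlgHom.commutes, Algebra.TensorProduct.algebraMap_apply]

/-- `ρ`, viewed as a `B`-algebra homomorphism `A → A ⊗ H`, where `B = A^{coH}` and `A ⊗ H`
is a `B`-algebra via the left tensor factor. -/
noncomputable def rhoCoinv (k H A : Type*) [Field k] [CommRing H] [HopfAlgebra k H]
    [CommRing A] [Algebra k A] (ρ : A →ₐ[k] A ⊗[k] H) :
    A →ₐ[↥(coinvariants k H A ρ)] (A ⊗[k] H) where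
  toRingHom := ρ.toRingHom
  commutes' := fun b => by
    have hb : ρ (b : A) = (b : A) ⊗ₜ[k] 1 := b.2
    have : algebraMap ↥(coinvariants k H A ρ) (A ⊗[k] H) b
        = algebraMap A (A ⊗[k] H) (b : A) := rfl
    rw [this, Algebra.TensorProduct.algebraMap_apply]
    exact hb

/-- The canonical map `can : A ⊗_B A → A ⊗ H`, `a ⊗ a' ↦ (a ⊗ 1) · ρ(a')`,
where `B = A^{coH}`. -/
noncomputable def canonicalMap (k H A : Type*) [Field k] [CommRing H] [HopfAlgebra k H]
    [CommRing A] [Algebra k A] (ρ : A →ₐ[k] A ⊗[k] H) :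
    A ⊗[↥(coinvariants k H A ρ)] A →ₐ[↥(coinvariants k H A ρ)] (A ⊗[k] H) :=
  Algebra.TensorProduct.productMap
    ((Algebra.ofId A (A ⊗[k] H)).restrictScalars ↥(coinvariants k H A ρ))
    (rhoCoinv k H A ρ)

/-- The action map `A ⊗ N → N`, `a ⊗ n ↦ a • n`, for an `A`-module `N`. -/
noncomputable def actionMap (k A N : Type*) [Field k] [CommRing A] [Algebra k A]
    [AddCommGroup N] [Module k N] [Module A N] [IsScalarTower k A N] :
    A ⊗[k] N →ₗ[k] N :=
  TensorProduct.lift (LinearMap.mk₂ k (fun a n => a • n)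
    (fun a a' n => add_smul a a' n)
    (fun c a n => smul_assoc c a n)
    (fun a n n' => smul_add a n n')
    (fun c a n => (smul_comm c a n).symm))

/-- The right `A`-module structure on `N ⊗ H`:
`(n ⊗ h) ⋆ (a ⊗ h') = (a • n) ⊗ (h * h')`, so that `w ⋆ ρ(a)` is the action
`(n ⊗ h)·a = Σ n·a₍₀₎ ⊗ h·a₍₁₎` of `a ∈ A` on `n ⊗ h ∈ N ⊗ H`. -/
noncomputable def hopfSMul (k H A N : Type*) [Field k] [CommRing H] [HopfAlgebra k H]
    [CommRing A] [Algebra k A]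
    [AddCommGroup N] [Module k N] [Module A N] [IsScalarTower k A N]
    (z : A ⊗[k] H) (w : N ⊗[k] H) : N ⊗[k] H :=
  (TensorProduct.map (actionMap k A N) (LinearMap.mul' k H))
    ((TensorProduct.tensorTensorTensorComm k A H N H) (z ⊗ₜ w))

/-- The coinvariants `N^{coH} = {n ∈ N : ρ_N(n) = n ⊗ 1}` of an `(A,H)`-Hopf module `N`,
as a `B`-submodule of `N`, where `B = A^{coH}`. -/
def hopfCoinvariants (k H A N : Type*) [Field k] [CommRing H] [HopfAlgebra k H]
    [CommRing A] [Algebra k A]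
    [AddCommGroup N] [Module k N] [Module A N] [IsScalarTower k A N]
    (ρ : A →ₐ[k] A ⊗[k] H) (ρN : N →ₗ[k] N ⊗[k] H)
    (hcompat : ∀ (a : A) (n : N), ρN (a • n) = hopfSMul k H A N (ρ a) (ρN n)) :
    Submodule ↥(coinvariants k H A ρ) N where
  carrier := {n | ρN n = n ⊗ₜ[k] 1}
  add_mem' := by
    intro x y hx hy
    simp only [Set.mem_setOf_eq] at *
    rw [map_add, hx, hy, TensorProduct.add_tmul]
  zero_mem' := by
    simp only [Set.mem_setOf_eq, map_zero, TensorProduct.zero_tmul]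
  smul_mem' := by
    intro b n hn
    simp only [Set.mem_setOf_eq] at *
    have hb : ρ (b : A) = (b : A) ⊗ₜ[k] 1 := b.2
    have hbn : (b • n : N) = (b : A) • n := rfl
    rw [hbn, hcompat, hn, hb]
    simp [hopfSMul, actionMap]



open TensorProduct LinearMap Coalgebra HopfAlgebra

suppress_compilation

namespace SchneiderAux

variable {k H : Type*} [Field k] [CommRing H] [HopfAlgebra k H]

lemma antipode_one : antipode (R := k) (A := H) 1 = 1 := by
  have h := mul_antipode_rTensor_comul_apply (R := k) (A := H) 1
  rw [Bialgebra.comul_one, Bialgebra.counit_one, Algebra.TensorProduct.one_def] at h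
  simpa using h

/-- Convolution product on linear maps `H → H ⊗ H`. -/
def convH (f g : H →ₗ[k] H ⊗[k] H) : H →ₗ[k] H ⊗[k] H :=
  mul' k (H ⊗[k] H) ∘ₗ map f g ∘ₗ comul

/-- `h ↦ S h ⊗ 1` -/
def sigmaH (k H : Type*) [Field k] [CommRing H] [HopfAlgebra k H] : H →ₗ[k] H ⊗[k] H :=
  ((mk k H H).flip 1) ∘ₗ antipode k

/-- `h ↦ 1 ⊗ h` -/
def oneTmul (k H : Type*) [Field k] [CommRing H] [HopfAlgebra k H] : H →ₗ[k] H ⊗[k] H :=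
  mk k H H 1

/-- `Δ ∘ S` -/
def deltaS (k H : Type*) [Field k] [CommRing H] [HopfAlgebra k H] : H →ₗ[k] H ⊗[k] H :=
  comul ∘ₗ antipode k

/-- `h ↦ ε h • 1` -/
def cntH (k H : Type*) [Field k] [CommRing H] [HopfAlgebra k H] : H →ₗ[k] H ⊗[k] H :=
  Algebra.linearMap k (H ⊗[k] H) ∘ₗ counit

lemma convH_apply_repr (f g : H →ₗ[k] H ⊗[k] H) (h : H) (r : Coalgebra.Repr k h (H × H)) :
    convH f g h = ∑ i ∈ r.index, f (r.left i) * g (r.right i) := by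
  simp only [convH, LinearMap.coe_comp, Function.comp_apply, ← r.eq, map_sum,
    map_tmul, LinearMap.mul'_apply]

lemma convH_assoc (f g p : H →ₗ[k] H ⊗[k] H) :
    convH (convH f g) p = convH f (convH g p) := by
  ext h
  set r := Coalgebra.Repr.arbitrary k h
  set a1 : (i : H × H) → Coalgebra.Repr k (r.left i) (H × H) := fun i => Coalgebra.Repr.arbitrary k _
  set a2 : (i : H × H) → Coalgebra.Repr k (r.right i) (H × H) := fun i => Coalgebra.Repr.arbitrary k _
  have key := Coalgebra.sum_tmul_tmul_eq r a1 a2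
  -- apply the trilinear multiplication map with f, g, p
  have key2 := congrArg (TensorProduct.map (f : H →ₗ[k] H ⊗[k] H)
      (TensorProduct.map (g : H →ₗ[k] H ⊗[k] H) (p : H →ₗ[k] H ⊗[k] H))) key
  have key3 := congrArg (mul' k (H ⊗[k] H) ∘ₗ lTensor (H ⊗[k] H) (mul' k (H ⊗[k] H))) key2
  simp only [map_sum, map_tmul, LinearMap.coe_comp, Function.comp_apply,
    lTensor_tmul, LinearMap.mul'_apply] at key3
  -- key3 : ∑ i ∑ j, f ((a1 i).left j) * (g ((a1 i).right j) * p (r.right i))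
  --      = ∑ i ∑ j, f (r.left i) * (g ((a2 i).left j) * p ((a2 i).right j))
  rw [convH_apply_repr (convH f g) p h r, convH_apply_repr f (convH g p) h r]
  calc ∑ i ∈ r.index, convH f g (r.left i) * p (r.right i)
      = ∑ i ∈ r.index, ∑ j ∈ (a1 i).index,
          f ((a1 i).left j) * (g ((a1 i).right j) * p (r.right i)) := by
        refine Finset.sum_congr rfl fun i _ => ?_
        rw [convH_apply_repr f g _ (a1 i), Finset.sum_mul]
        exact Finset.sum_congr rfl fun j _ => (mul_assoc _ _ _)
    _ = ∑ i ∈ r.index, ∑ j ∈ (a2 i).index,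
          f (r.left i) * (g ((a2 i).left j) * p ((a2 i).right j)) := key3
    _ = ∑ i ∈ r.index, f (r.left i) * convH g p (r.right i) := by
        refine Finset.sum_congr rfl fun i _ => ?_
        rw [convH_apply_repr g p _ (a2 i), Finset.mul_sum]



@[simp] lemma sigmaH_apply (x : H) : sigmaH k H x = antipode (R := k) x ⊗ₜ[k] 1 := rfl
@[simp] lemma oneTmul_apply (x : H) : oneTmul k H x = 1 ⊗ₜ[k] x := rfl
@[simp] lemma deltaS_apply (x : H) : deltaS k H x = comul (antipode (R := k) x) := rfl
@[simp] lemma cntH_apply (x : H) : cntH k H x = algebraMap k (H ⊗[k] H) (counit x) := rfl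

lemma conv_sigma_comul : convH (sigmaH k H) comul = oneTmul k H := by
  ext h
  set r := Coalgebra.Repr.arbitrary k h with hr
  set a1 : (i : H × H) → Coalgebra.Repr k (r.left i) (H × H) := fun i => Coalgebra.Repr.arbitrary k _
  set a2 : (i : H × H) → Coalgebra.Repr k (r.right i) (H × H) := fun i => Coalgebra.Repr.arbitrary k _
  have key := congrArg (rTensor H (mul' k H) ∘ₗ rTensor H (rTensor H (antipode (R := k))) ∘ₗ
      (TensorProduct.assoc k H H H).symm.toLinearMap) (Coalgebra.sum_tmul_tmul_eq r a1 a2)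
  simp only [map_sum, LinearMap.coe_comp, Function.comp_apply, LinearEquiv.coe_coe,
    TensorProduct.assoc_symm_tmul, rTensor_tmul, LinearMap.mul'_apply] at key
  show convH (sigmaH k H) comul h = oneTmul k H h
  calc convH (sigmaH k H) comul h
      = ∑ i ∈ r.index, ∑ j ∈ (a2 i).index,
          (antipode (R := k) (r.left i) * (a2 i).left j) ⊗ₜ[k] (a2 i).right j := by
        rw [convH_apply_repr _ _ h r]
        refine Finset.sum_congr rfl fun i _ => ?_
        rw [sigmaH_apply, ← (a2 i).eq, Finset.mul_sum]
        refine Finset.sum_congr rfl fun j _ => ?_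
        rw [Algebra.TensorProduct.tmul_mul_tmul, one_mul]
    _ = ∑ i ∈ r.index, ∑ j ∈ (a1 i).index,
          (antipode (R := k) ((a1 i).left j) * (a1 i).right j) ⊗ₜ[k] r.right i := key.symm
    _ = ∑ i ∈ r.index, (algebraMap k H (counit (r.left i))) ⊗ₜ[k] r.right i := by
        refine Finset.sum_congr rfl fun i _ => ?_
        rw [← TensorProduct.sum_tmul, HopfAlgebra.sum_antipode_mul_eq_algebraMap_counit (a1 i)]
    _ = 1 ⊗ₜ[k] h := by
        have hc := congrArg (TensorProduct.lid k H) (Coalgebra.sum_counit_tmul_eq r)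
        simp only [map_sum, TensorProduct.lid_tmul, one_smul] at hc
        calc ∑ i ∈ r.index, (algebraMap k H (counit (r.left i))) ⊗ₜ[k] r.right i
            = ∑ i ∈ r.index, 1 ⊗ₜ[k] ((counit (R := k) (r.left i)) • r.right i) := by
              refine Finset.sum_congr rfl fun i _ => ?_
              rw [Algebra.algebraMap_eq_smul_one, TensorProduct.smul_tmul]
          _ = 1 ⊗ₜ[k] h := by rw [← TensorProduct.tmul_sum, hc]

lemma conv_comul_deltaS : convH comul (deltaS k H) = cntH k H := by
  ext h
  set r := Coalgebra.Repr.arbitrary k h with hr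
  show convH comul (deltaS k H) h = cntH k H h
  rw [convH_apply_repr _ _ h r, cntH_apply]
  calc ∑ i ∈ r.index, comul (R := k) (r.left i) * deltaS k H (r.right i)
      = ∑ i ∈ r.index, comul (R := k) (r.left i * antipode (R := k) (r.right i)) := by
        refine Finset.sum_congr rfl fun i _ => ?_
        rw [deltaS_apply, ← Bialgebra.comulAlgHom_apply k H, ← Bialgebra.comulAlgHom_apply k H,
          ← Bialgebra.comulAlgHom_apply k H, ← map_mul]
    _ = comul (R := k) (∑ i ∈ r.index, r.left i * antipode (R := k) (r.right i)) := by
        rw [map_sum]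
    _ = algebraMap k (H ⊗[k] H) (counit h) := by
        rw [HopfAlgebra.sum_mul_antipode_eq_algebraMap_counit r, ← Bialgebra.comulAlgHom_apply k H,
          AlgHom.commutes]

lemma conv_sigma_cnt : convH (sigmaH k H) (cntH k H) = sigmaH k H := by
  ext h
  set r := Coalgebra.Repr.arbitrary k h with hr
  show convH (sigmaH k H) (cntH k H) h = sigmaH k H h
  rw [convH_apply_repr _ _ h r]
  have hc := congrArg (TensorProduct.rid k H) (Coalgebra.sum_tmul_counit_eq r)
  simp only [map_sum, TensorProduct.rid_tmul, one_smul] at hc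
  calc ∑ i ∈ r.index, sigmaH k H (r.left i) * cntH k H (r.right i)
      = ∑ i ∈ r.index, counit (R := k) (r.right i) • sigmaH k H (r.left i) := by
        refine Finset.sum_congr rfl fun i _ => ?_
        rw [cntH_apply, Algebra.algebraMap_eq_smul_one, mul_smul_comm, mul_one]
    _ = sigmaH k H (∑ i ∈ r.index, counit (R := k) (r.right i) • r.left i) := by
        rw [map_sum]; exact Finset.sum_congr rfl fun i _ => by rw [map_smul]
    _ = sigmaH k H h := by rw [hc]

/-- The key `H`-level identity: `∑ (S h₂)₍₁₎ ⊗ h₁ · (S h₂)₍₂₎ = S h ⊗ 1`. -/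
lemma gamma_comul : convH (oneTmul k H) (deltaS k H) = sigmaH k H := by
  rw [← conv_sigma_comul, convH_assoc, conv_comul_deltaS, conv_sigma_cnt]


section ModuleLemmas

variable {k H A N : Type*} [Field k] [CommRing H] [HopfAlgebra k H]
  [CommRing A] [Algebra k A]
  [AddCommGroup N] [Module k N] [Module A N] [IsScalarTower k A N]

@[simp] lemma actionMap_tmul (a : A) (n : N) : actionMap k A N (a ⊗ₜ[k] n) = a • n := by
  simp [actionMap]

lemma hopfSMul_tmul (a : A) (h : H) (n : N) (h' : H) :
    hopfSMul k H A N (a ⊗ₜ[k] h) (n ⊗ₜ[k] h') = (a • n) ⊗ₜ[k] (h * h') := by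
  simp [hopfSMul]

variable (k H A N) in
/-- `hopfSMul` as a linear map. -/
def bigHS : (A ⊗[k] H) ⊗[k] (N ⊗[k] H) →ₗ[k] N ⊗[k] H :=
  (map (actionMap k A N) (mul' k H)) ∘ₗ (tensorTensorTensorComm k A H N H).toLinearMap

lemma bigHS_tmul (z : A ⊗[k] H) (w : N ⊗[k] H) :
    bigHS k H A N (z ⊗ₜ[k] w) = hopfSMul k H A N z w := rfl

lemma hopfSMul_mul (z w : A ⊗[k] H) : hopfSMul k H A A z w = z * w := by
  induction z using TensorProduct.induction_on with
  | zero => rw [← bigHS_tmul, TensorProduct.zero_tmul, LinearMap.map_zero, zero_mul]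
  | add z1 z2 ih1 ih2 =>
      rw [← bigHS_tmul, TensorProduct.add_tmul, map_add, bigHS_tmul, bigHS_tmul, ih1, ih2,
        add_mul]
  | tmul a g =>
      induction w using TensorProduct.induction_on with
      | zero => rw [← bigHS_tmul, TensorProduct.tmul_zero, LinearMap.map_zero, mul_zero]
      | add w1 w2 ih1 ih2 =>
          rw [← bigHS_tmul, TensorProduct.tmul_add, map_add, bigHS_tmul, bigHS_tmul, ih1, ih2,
            mul_add]
      | tmul b h =>
          rw [hopfSMul_tmul, Algebra.TensorProduct.tmul_mul_tmul, smul_eq_mul]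

variable (k H A N) in
/-- `n ⊗ h ↦ φ(S h) • n`. -/
def qmap (φ : H →ₗ[k] A) : N ⊗[k] H →ₗ[k] N :=
  actionMap k A N ∘ₗ (TensorProduct.comm k N A).toLinearMap ∘ₗ
    lTensor N (φ ∘ₗ antipode (R := k))

@[simp] lemma qmap_tmul (φ : H →ₗ[k] A) (n : N) (h : H) :
    qmap k H A N φ (n ⊗ₜ[k] h) = φ (antipode (R := k) h) • n := by
  simp [qmap]

variable (k H A N) in
/-- `(n ⊗ h) ⊗ (c ⊗ g) ↦ (c * φ(S (h g))) • n`. -/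
def G0 (φ : H →ₗ[k] A) : (N ⊗[k] H) ⊗[k] (A ⊗[k] H) →ₗ[k] N :=
  actionMap k A N ∘ₗ (TensorProduct.comm k N A).toLinearMap ∘ₗ lTensor N (mul' k A) ∘ₗ
    (TensorProduct.assoc k N A A).toLinearMap ∘ₗ
    (map LinearMap.id (φ ∘ₗ antipode (R := k) ∘ₗ mul' k H)) ∘ₗ
    (tensorTensorTensorComm k N H A H).toLinearMap

@[simp] lemma G0_tmul (φ : H →ₗ[k] A) (n : N) (h : H) (c : A) (g : H) :
    G0 k H A N φ ((n ⊗ₜ[k] h) ⊗ₜ[k] (c ⊗ₜ[k] g))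
      = (c * φ (antipode (R := k) (h * g))) • n := by
  simp [G0]

/-- The key identity: `∑ (1 * φ(S(n₍₁₎ * S n₍₂₎))) • n₍₀₎ = n`. -/
lemma KI (φ : H →ₗ[k] A) (ρN : N →ₗ[k] N ⊗[k] H)
    (hNcoassoc : (TensorProduct.assoc k N H H).toLinearMap ∘ₗ
        (LinearMap.rTensor H ρN) ∘ₗ ρN
      = (LinearMap.lTensor N (Coalgebra.comul (R := k))) ∘ₗ ρN)
    (hNcounit : (TensorProduct.rid k N).toLinearMap ∘ₗ
        (LinearMap.lTensor N (Coalgebra.counit (R := k))) ∘ₗ ρN = LinearMap.id)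
    (hφ1 : φ 1 = 1) (n : N) :
    G0 k H A N φ (rTensor (A ⊗[k] H) ρN
      (lTensor N ((mk k A H 1) ∘ₗ antipode (R := k)) (ρN n))) = n := by
  have hcomm : rTensor (A ⊗[k] H) ρN ∘ₗ lTensor N ((mk k A H 1) ∘ₗ antipode (R := k))
      = lTensor (N ⊗[k] H) ((mk k A H 1) ∘ₗ antipode (R := k)) ∘ₗ rTensor H ρN := by
    rw [rTensor_comp_lTensor, lTensor_comp_rTensor]
  have h1 : rTensor (A ⊗[k] H) ρN (lTensor N ((mk k A H 1) ∘ₗ antipode (R := k)) (ρN n))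
      = lTensor (N ⊗[k] H) ((mk k A H 1) ∘ₗ antipode (R := k))
          (rTensor H ρN (ρN n)) := LinearMap.congr_fun hcomm (ρN n)
  have h2 : rTensor H ρN (ρN n)
      = (TensorProduct.assoc k N H H).symm (lTensor N (comul (R := k)) (ρN n)) := by
    rw [LinearEquiv.eq_symm_apply]
    have := LinearMap.congr_fun hNcoassoc n
    simpa only [LinearMap.coe_comp, Function.comp_apply, LinearEquiv.coe_coe] using this
  have KIsub : ∀ (n' : N) (u : H ⊗[k] H),
      G0 k H A N φ (lTensor (N ⊗[k] H) ((mk k A H 1) ∘ₗ antipode (R := k))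
        ((TensorProduct.assoc k N H H).symm (n' ⊗ₜ[k] u)))
      = φ (antipode (R := k) ((mul' k H) (lTensor H (antipode (R := k)) u))) • n' := by
    intro n' u
    induction u using TensorProduct.induction_on with
    | zero => simp
    | add u1 u2 ih1 ih2 =>
        simp only [TensorProduct.tmul_add, map_add, ih1, ih2, add_smul]
    | tmul g g' => simp [one_mul]
  have KIc : ∀ w : N ⊗[k] H,
      G0 k H A N φ (lTensor (N ⊗[k] H) ((mk k A H 1) ∘ₗ antipode (R := k))
        ((TensorProduct.assoc k N H H).symm (lTensor N (comul (R := k)) w)))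
      = (TensorProduct.rid k N) (lTensor N (counit (R := k)) w) := by
    intro w
    induction w using TensorProduct.induction_on with
    | zero => simp
    | add w1 w2 ih1 ih2 => simp only [map_add, ih1, ih2]
    | tmul n' h =>
        rw [lTensor_tmul, KIsub n' (comul h), mul_antipode_lTensor_comul_apply,
          Algebra.algebraMap_eq_smul_one, map_smul, map_smul, antipode_one, hφ1,
          lTensor_tmul, TensorProduct.rid_tmul, smul_one_smul]
  rw [h1, h2, KIc (ρN n)]
  have := LinearMap.congr_fun hNcounit n
  simpa only [LinearMap.coe_comp, Function.comp_apply, LinearEquiv.coe_coe,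
    LinearMap.id_coe, id_eq] using this

lemma rhoN_qmap (ρ : A →ₐ[k] A ⊗[k] H) (φ : H →ₗ[k] A) (ρN : N →ₗ[k] N ⊗[k] H)
    (hcompat : ∀ (a : A) (n : N), ρN (a • n) = hopfSMul k H A N (ρ a) (ρN n))
    (v : N ⊗[k] H) :
    ρN (qmap k H A N φ v)
      = bigHS k H A N ((map (ρ.toLinearMap ∘ₗ φ ∘ₗ antipode (R := k)) ρN)
          ((TensorProduct.comm k N H) v)) := by
  induction v using TensorProduct.induction_on with
  | zero => simp
  | add v1 v2 ih1 ih2 => simp only [map_add, ih1, ih2]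
  | tmul n h =>
      rw [qmap_tmul, hcompat]
      simp [bigHS_tmul]

variable (k H A N) in
/-- `n ⊗ (p ⊗ q) ↦ (φ p • n) ⊗ q`. -/
def ZZmap (φ : H →ₗ[k] A) : N ⊗[k] (H ⊗[k] H) →ₗ[k] N ⊗[k] H :=
  rTensor H (actionMap k A N ∘ₗ (TensorProduct.comm k N A).toLinearMap) ∘ₗ
    (TensorProduct.assoc k N A H).symm.toLinearMap ∘ₗ lTensor N (rTensor H φ)

@[simp] lemma ZZmap_tmul (φ : H →ₗ[k] A) (n : N) (p q : H) :
    ZZmap k H A N φ (n ⊗ₜ (p ⊗ₜ q)) = (φ p • n) ⊗ₜ q := by simp [ZZmap]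

lemma sub0 (φ : H →ₗ[k] A) (n' : N) (h : H) (u' : H ⊗[k] H) :
    bigHS k H A N ((rTensor H φ u') ⊗ₜ (n' ⊗ₜ h))
      = ZZmap k H A N φ (n' ⊗ₜ ((mul' k (H ⊗[k] H)) ((1 ⊗ₜ[k] h) ⊗ₜ u'))) := by
  induction u' using TensorProduct.induction_on with
  | zero => simp
  | add u1 u2 ih1 ih2 =>
      simp only [map_add, TensorProduct.add_tmul, TensorProduct.tmul_add, ih1, ih2]
  | tmul p q =>
      rw [rTensor_tmul, bigHS_tmul, hopfSMul_tmul, LinearMap.mul'_apply,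
        Algebra.TensorProduct.tmul_mul_tmul, one_mul, ZZmap_tmul, mul_comm q h]

lemma sub1 (φ : H →ₗ[k] A) (n' : N) (u : H ⊗[k] H) :
    bigHS k H A N ((TensorProduct.comm k (N ⊗[k] H) (A ⊗[k] H))
        (lTensor (N ⊗[k] H) (rTensor H φ ∘ₗ deltaS k H)
          ((TensorProduct.assoc k N H H).symm (n' ⊗ₜ u))))
      = ZZmap k H A N φ
          (n' ⊗ₜ ((mul' k (H ⊗[k] H) ∘ₗ map (oneTmul k H) (deltaS k H)) u)) := by
  induction u using TensorProduct.induction_on with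
  | zero => simp
  | add u1 u2 ih1 ih2 => simp only [TensorProduct.tmul_add, map_add, ih1, ih2]
  | tmul h g =>
      have expand : (TensorProduct.comm k (N ⊗[k] H) (A ⊗[k] H))
          (lTensor (N ⊗[k] H) (rTensor H φ ∘ₗ deltaS k H)
            ((TensorProduct.assoc k N H H).symm (n' ⊗ₜ (h ⊗ₜ g))))
          = (rTensor H φ (deltaS k H g)) ⊗ₜ ((n' : N) ⊗ₜ[k] h) := by
        simp only [TensorProduct.assoc_symm_tmul, lTensor_tmul, LinearMap.coe_comp,
          Function.comp_apply, TensorProduct.comm_tmul]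
      rw [expand, sub0 φ n' h (deltaS k H g)]
      simp only [LinearMap.coe_comp, Function.comp_apply, map_tmul, oneTmul_apply]

lemma coinv_P (ρ : A →ₐ[k] A ⊗[k] H) (φ : H →ₗ[k] A) (ρN : N →ₗ[k] N ⊗[k] H)
    (hφ : ρ.toLinearMap ∘ₗ φ = (LinearMap.rTensor H φ) ∘ₗ (Coalgebra.comul (R := k)))
    (hcompat : ∀ (a : A) (n : N), ρN (a • n) = hopfSMul k H A N (ρ a) (ρN n))
    (hNcoassoc : (TensorProduct.assoc k N H H).toLinearMap ∘ₗ
        (LinearMap.rTensor H ρN) ∘ₗ ρN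
      = (LinearMap.lTensor N (Coalgebra.comul (R := k))) ∘ₗ ρN)
    (n : N) :
    ρN (qmap k H A N φ (ρN n)) = qmap k H A N φ (ρN n) ⊗ₜ[k] (1 : H) := by
  have hf1 : ρ.toLinearMap ∘ₗ φ ∘ₗ antipode (R := k)
      = rTensor H φ ∘ₗ deltaS k H := by
    ext g
    simpa [deltaS] using LinearMap.congr_fun hφ (antipode (R := k) g)
  have step2 : ∀ v : N ⊗[k] H,
      bigHS k H A N ((map (rTensor H φ ∘ₗ deltaS k H) ρN) ((TensorProduct.comm k N H) v))
        = bigHS k H A N ((TensorProduct.comm k (N ⊗[k] H) (A ⊗[k] H))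
            (lTensor (N ⊗[k] H) (rTensor H φ ∘ₗ deltaS k H) (rTensor H ρN v))) := by
    intro v
    induction v using TensorProduct.induction_on with
    | zero => simp
    | add v1 v2 ih1 ih2 => simp only [map_add, ih1, ih2]
    | tmul n' h => simp
  have h2 : rTensor H ρN (ρN n)
      = (TensorProduct.assoc k N H H).symm (lTensor N (comul (R := k)) (ρN n)) := by
    rw [LinearEquiv.eq_symm_apply]
    have := LinearMap.congr_fun hNcoassoc n
    simpa only [LinearMap.coe_comp, Function.comp_apply, LinearEquiv.coe_coe] using this
  have step4 : ∀ w : N ⊗[k] H,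
      bigHS k H A N ((TensorProduct.comm k (N ⊗[k] H) (A ⊗[k] H))
        (lTensor (N ⊗[k] H) (rTensor H φ ∘ₗ deltaS k H)
          ((TensorProduct.assoc k N H H).symm (lTensor N (comul (R := k)) w))))
      = (qmap k H A N φ w) ⊗ₜ[k] (1 : H) := by
    intro w
    induction w using TensorProduct.induction_on with
    | zero => simp
    | add w1 w2 ih1 ih2 =>
        simp only [map_add, ih1, ih2, ← TensorProduct.add_tmul]
    | tmul n' h =>
        rw [lTensor_tmul, sub1 φ n' (comul h)]
        have hcore : (mul' k (H ⊗[k] H) ∘ₗ map (oneTmul k H) (deltaS k H))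
            ((comul (R := k)) h) = sigmaH k H h := by
          have := LinearMap.congr_fun (gamma_comul (k := k) (H := H)) h
          simpa only [convH, LinearMap.coe_comp, Function.comp_apply] using this
        rw [hcore, sigmaH_apply, ZZmap_tmul, qmap_tmul]
  calc ρN (qmap k H A N φ (ρN n))
      = bigHS k H A N ((map (ρ.toLinearMap ∘ₗ φ ∘ₗ antipode (R := k)) ρN)
          ((TensorProduct.comm k N H) (ρN n))) := rhoN_qmap ρ φ ρN hcompat (ρN n)
    _ = bigHS k H A N ((map (rTensor H φ ∘ₗ deltaS k H) ρN)
          ((TensorProduct.comm k N H) (ρN n))) := by rw [hf1]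
    _ = bigHS k H A N ((TensorProduct.comm k (N ⊗[k] H) (A ⊗[k] H))
          (lTensor (N ⊗[k] H) (rTensor H φ ∘ₗ deltaS k H) (rTensor H ρN (ρN n)))) :=
        step2 (ρN n)
    _ = qmap k H A N φ (ρN n) ⊗ₜ[k] (1 : H) := by rw [h2]; exact step4 (ρN n)

lemma factor (φ : H →ₗ[k] A) (x : A) (z : A ⊗[k] H) (v : N ⊗[k] H) :
    x • qmap k H A N φ (bigHS k H A N (z ⊗ₜ v))
      = G0 k H A N φ (v ⊗ₜ ((x ⊗ₜ[k] (1 : H)) * z)) := by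
  induction z using TensorProduct.induction_on with
  | zero => simp
  | add z1 z2 ih1 ih2 =>
      simp only [TensorProduct.tmul_add, TensorProduct.add_tmul, map_add, mul_add,
        smul_add, ih1, ih2]
  | tmul a g =>
      induction v using TensorProduct.induction_on with
      | zero => simp
      | add v1 v2 ih1 ih2 =>
          simp only [TensorProduct.tmul_add, TensorProduct.add_tmul, map_add, smul_add,
            ih1, ih2]
      | tmul n h =>
          rw [bigHS_tmul, hopfSMul_tmul, qmap_tmul, Algebra.TensorProduct.tmul_mul_tmul,
            one_mul, G0_tmul, smul_smul, smul_smul]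
          congr 1
          rw [mul_comm g h]
          ring

lemma hopf_smul_coinv (m : N) (z : A ⊗[k] H) :
    hopfSMul k H A N z (m ⊗ₜ[k] (1 : H))
      = rTensor H (actionMap k A N ∘ₗ (mk k A N).flip m) z := by
  induction z using TensorProduct.induction_on with
  | zero => rw [← bigHS_tmul, TensorProduct.zero_tmul, LinearMap.map_zero, LinearMap.map_zero]
  | add z1 z2 ih1 ih2 =>
      rw [← bigHS_tmul, TensorProduct.add_tmul, map_add, bigHS_tmul, bigHS_tmul, ih1, ih2,
        map_add]
  | tmul a g => rw [hopfSMul_tmul, rTensor_tmul, mul_one]; simp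

lemma qmap_coinv (φ : H →ₗ[k] A) (m : N) (z : A ⊗[k] H) :
    qmap k H A N φ (rTensor H (actionMap k A N ∘ₗ (mk k A N).flip m) z)
      = (qmap k H A A φ z) • m := by
  induction z using TensorProduct.induction_on with
  | zero => simp
  | add z1 z2 ih1 ih2 => simp only [map_add, ih1, ih2, add_smul]
  | tmul a g =>
      rw [rTensor_tmul, qmap_tmul, qmap_tmul]
      simp only [LinearMap.coe_comp, Function.comp_apply, LinearMap.flip_apply,
        TensorProduct.mk_apply, actionMap_tmul]
      rw [smul_smul, smul_eq_mul]

lemma qmap_hopfSMul_one (φ : H →ₗ[k] A) (b : A) (w : N ⊗[k] H) :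
    qmap k H A N φ (hopfSMul k H A N (b ⊗ₜ[k] (1 : H)) w) = b • qmap k H A N φ w := by
  induction w using TensorProduct.induction_on with
  | zero =>
      rw [← bigHS_tmul, TensorProduct.tmul_zero, LinearMap.map_zero, LinearMap.map_zero]
      rw [smul_zero]
  | add w1 w2 ih1 ih2 =>
      rw [← bigHS_tmul, TensorProduct.tmul_add, map_add, bigHS_tmul, bigHS_tmul, map_add,
        ih1, ih2, map_add, smul_add]
  | tmul n h =>
      rw [hopfSMul_tmul, qmap_tmul, one_mul, qmap_tmul, smul_smul, smul_smul, mul_comm]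

end ModuleLemmas

section Constructions

set_option maxHeartbeats 1000000
set_option synthInstance.maxHeartbeats 1000000

variable (k H A N : Type*) [Field k] [CommRing H] [HopfAlgebra k H]
  [CommRing A] [Algebra k A]
  [AddCommGroup N] [Module k N] [Module A N] [IsScalarTower k A N]
  (ρ : A →ₐ[k] A ⊗[k] H) (ρN : N →ₗ[k] N ⊗[k] H) (φ : H →ₗ[k] A)

/-- The evaluation map `N^{coH} ⊗_B A → N`. -/
def eMap (hcompat : ∀ (a : A) (n : N), ρN (a • n) = hopfSMul k H A N (ρ a) (ρN n)) :
    ↥(hopfCoinvariants k H A N ρ ρN hcompat) ⊗[↥(coinvariants k H A ρ)] A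
      →ₗ[↥(coinvariants k H A ρ)] N :=
  TensorProduct.lift (LinearMap.mk₂ ↥(coinvariants k H A ρ) (fun m a => a • (m : N))
    (fun m m' a => by
      show a • ((m : N) + (m' : N)) = a • (m : N) + a • (m' : N)
      rw [smul_add])
    (fun b m a => by
      show a • ((b : A) • (m : N)) = (b : A) • (a • (m : N))
      rw [smul_smul, smul_smul, mul_comm])
    (fun m a a' => by
      show (a + a') • (m : N) = a • (m : N) + a' • (m : N)
      rw [add_smul])
    (fun b m a => by
      show ((b : A) * a) • (m : N) = (b : A) • (a • (m : N))
      rw [mul_smul]))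

@[simp] lemma eMap_tmul (hcompat) (m : ↥(hopfCoinvariants k H A N ρ ρN hcompat)) (a : A) :
    eMap k H A N ρ ρN hcompat (m ⊗ₜ a) = a • (m : N) := by
  simp [eMap]

variable (hφ : ρ.toLinearMap ∘ₗ φ = (LinearMap.rTensor H φ) ∘ₗ (Coalgebra.comul (R := k)))
  (hcompat : ∀ (a : A) (n : N), ρN (a • n) = hopfSMul k H A N (ρ a) (ρN n))
  (hNcoassoc : (TensorProduct.assoc k N H H).toLinearMap ∘ₗ
        (LinearMap.rTensor H ρN) ∘ₗ ρN
      = (LinearMap.lTensor N (Coalgebra.comul (R := k))) ∘ₗ ρN)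

/-- The coinvariant projection, with values in `N^{coH}`. -/
def PcFun : N → ↥(hopfCoinvariants k H A N ρ ρN hcompat) := fun n =>
  ⟨qmap k H A N φ (ρN n), coinv_P ρ φ ρN hφ hcompat hNcoassoc n⟩

@[simp] lemma PcFun_coe (n : N) :
    (PcFun k H A N ρ ρN φ hφ hcompat hNcoassoc n : N) = qmap k H A N φ (ρN n) := rfl

lemma PcFun_add (n n' : N) :
    PcFun k H A N ρ ρN φ hφ hcompat hNcoassoc (n + n')
      = PcFun k H A N ρ ρN φ hφ hcompat hNcoassoc n
        + PcFun k H A N ρ ρN φ hφ hcompat hNcoassoc n' :=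
  Subtype.ext (by simp only [PcFun_coe, map_add, Submodule.coe_add])

lemma PcFun_ksmul (c : k) (n : N) :
    PcFun k H A N ρ ρN φ hφ hcompat hNcoassoc (c • n)
      = c • PcFun k H A N ρ ρN φ hφ hcompat hNcoassoc n :=
  Subtype.ext (by simp only [PcFun_coe, map_smul]; rfl)

lemma PcFun_bsmul (b : ↥(coinvariants k H A ρ)) (n : N) :
    PcFun k H A N ρ ρN φ hφ hcompat hNcoassoc ((b : A) • n)
      = b • PcFun k H A N ρ ρN φ hφ hcompat hNcoassoc n :=
  Subtype.ext (by
    have hb : ρ (b : A) = (b : A) ⊗ₜ[k] 1 := b.2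
    show qmap k H A N φ (ρN ((b : A) • n)) = _
    rw [hcompat, hb, qmap_hopfSMul_one]
    rfl)

/-- `t ↦ Pc(y • n) ⊗ x` for `t = x ⊗ y`. -/
def psinMap (n : N) : A ⊗[↥(coinvariants k H A ρ)] A
    →ₗ[↥(coinvariants k H A ρ)]
      ↥(hopfCoinvariants k H A N ρ ρN hcompat) ⊗[↥(coinvariants k H A ρ)] A :=
  TensorProduct.lift (LinearMap.mk₂ ↥(coinvariants k H A ρ)
    (fun x y => PcFun k H A N ρ ρN φ hφ hcompat hNcoassoc (y • n) ⊗ₜ x)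
    (fun x x' y => by
      show PcFun k H A N ρ ρN φ hφ hcompat hNcoassoc (y • n) ⊗ₜ (x + x')
          = PcFun k H A N ρ ρN φ hφ hcompat hNcoassoc (y • n) ⊗ₜ x
            + PcFun k H A N ρ ρN φ hφ hcompat hNcoassoc (y • n) ⊗ₜ x'
      rw [TensorProduct.tmul_add])
    (fun b x y => by
      show PcFun k H A N ρ ρN φ hφ hcompat hNcoassoc (y • n) ⊗ₜ (b • x)
          = b • (PcFun k H A N ρ ρN φ hφ hcompat hNcoassoc (y • n) ⊗ₜ x)
      rw [TensorProduct.tmul_smul])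
    (fun x y y' => by
      show PcFun k H A N ρ ρN φ hφ hcompat hNcoassoc ((y + y') • n) ⊗ₜ x = _
      rw [add_smul, PcFun_add, TensorProduct.add_tmul])
    (fun b x y => by
      show PcFun k H A N ρ ρN φ hφ hcompat hNcoassoc ((b • y) • n) ⊗ₜ x
          = b • (PcFun k H A N ρ ρN φ hφ hcompat hNcoassoc (y • n) ⊗ₜ x)
      have h1 : ((b • y : A)) • n = (b : A) • (y • n) := by
        show ((b : A) * y) • n = _
        rw [mul_smul]
      rw [h1, PcFun_bsmul, ← TensorProduct.smul_tmul']))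

@[simp] lemma psinMap_tmul (n : N) (x y : A) :
    psinMap k H A N ρ ρN φ hφ hcompat hNcoassoc n (x ⊗ₜ y)
      = PcFun k H A N ρ ρN φ hφ hcompat hNcoassoc (y • n) ⊗ₜ x := by
  rfl

/-- The map `Ψ : N ⊗ (A ⊗_B A) → N^{coH} ⊗_B A`. -/
def PsiMap : N ⊗[k] (A ⊗[↥(coinvariants k H A ρ)] A) →ₗ[k]
    ↥(hopfCoinvariants k H A N ρ ρN hcompat) ⊗[↥(coinvariants k H A ρ)] A :=
  TensorProduct.lift
  { toFun := fun n => (psinMap k H A N ρ ρN φ hφ hcompat hNcoassoc n).restrictScalars k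
    map_add' := fun n n' => by
      apply LinearMap.ext
      intro t
      induction t using TensorProduct.induction_on with
      | zero => simp
      | add t1 t2 ih1 ih2 =>
          simp only [map_add, LinearMap.add_apply] at ih1 ih2 ⊢
          rw [ih1, ih2]
      | tmul x y =>
          simp only [LinearMap.coe_restrictScalars, LinearMap.add_apply, psinMap_tmul,
            smul_add, PcFun_add, TensorProduct.add_tmul]
    map_smul' := fun c n => by
      apply LinearMap.ext
      intro t
      induction t using TensorProduct.induction_on with
      | zero => simp
      | add t1 t2 ih1 ih2 =>
          simp only [map_add, RingHom.id_apply, LinearMap.smul_apply] at ih1 ih2 ⊢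
          rw [ih1, ih2]
      | tmul x y =>
          simp only [LinearMap.coe_restrictScalars, RingHom.id_apply, LinearMap.smul_apply,
            psinMap_tmul]
          have h1 : y • (c • n) = c • (y • n) := smul_comm y c n
          rw [h1, PcFun_ksmul, TensorProduct.smul_tmul'] }

@[simp] lemma PsiMap_tmul (n : N) (t : A ⊗[↥(coinvariants k H A ρ)] A) :
    PsiMap k H A N ρ ρN φ hφ hcompat hNcoassoc (n ⊗ₜ t)
      = psinMap k H A N ρ ρN φ hφ hcompat hNcoassoc n t := by
  simp [PsiMap]

end Constructions

end SchneiderAux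

open LinearMap Coalgebra HopfAlgebra SchneiderAux

set_option maxHeartbeats 4000000
set_option synthInstance.maxHeartbeats 1000000

/-- **Schneider's theorem (one direction).**  Let `H` be a commutative Hopf algebra over a
field `k`, `A` a right `H`-comodule algebra with coinvariants `B = A^{coH}`, admitting a total
integral `φ : H → A`, and such that the canonical map `can : A ⊗_B A → A ⊗ H` is surjective.
Then for every `(A,H)`-Hopf module `N` the evaluation map `N^{coH} ⊗_B A → N`,
`n ⊗ a ↦ n·a`, is an isomorphism. -/
theorem stmt12 (k H A N : Type*) [Field k] [CommRing H] [HopfAlgebra k H]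
    [CommRing A] [Algebra k A]
    [AddCommGroup N] [Module k N] [Module A N] [IsScalarTower k A N]
    (ρ : A →ₐ[k] A ⊗[k] H)
    (hcoassoc : (TensorProduct.assoc k A H H).toLinearMap ∘ₗ
        (LinearMap.rTensor H ρ.toLinearMap) ∘ₗ ρ.toLinearMap
      = (LinearMap.lTensor A (Coalgebra.comul (R := k))) ∘ₗ ρ.toLinearMap)
    (hcounit : (TensorProduct.rid k A).toLinearMap ∘ₗ
        (LinearMap.lTensor A (Coalgebra.counit (R := k))) ∘ₗ ρ.toLinearMap = LinearMap.id)
    (ρN : N →ₗ[k] N ⊗[k] H)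
    (hNcoassoc : (TensorProduct.assoc k N H H).toLinearMap ∘ₗ
        (LinearMap.rTensor H ρN) ∘ₗ ρN
      = (LinearMap.lTensor N (Coalgebra.comul (R := k))) ∘ₗ ρN)
    (hNcounit : (TensorProduct.rid k N).toLinearMap ∘ₗ
        (LinearMap.lTensor N (Coalgebra.counit (R := k))) ∘ₗ ρN = LinearMap.id)
    (hcompat : ∀ (a : A) (n : N), ρN (a • n) = hopfSMul k H A N (ρ a) (ρN n))
    (φ : H →ₗ[k] A) (hφ1 : φ 1 = 1)
    (hφ : ρ.toLinearMap ∘ₗ φ = (LinearMap.rTensor H φ) ∘ₗ (Coalgebra.comul (R := k)))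
    (hcan : Function.Surjective (canonicalMap k H A ρ)) :
    ∃ e : ↥(hopfCoinvariants k H A N ρ ρN hcompat) ⊗[↥(coinvariants k H A ρ)] A
        →ₗ[↥(coinvariants k H A ρ)] N,
      (∀ (n : ↥(hopfCoinvariants k H A N ρ ρN hcompat)) (a : A),
        e (n ⊗ₜ a) = a • (n : N)) ∧
      Function.Bijective e := by
  classical
  have hcompatA : ∀ (a a' : A),
      ρ.toLinearMap (a • a') = hopfSMul k H A A (ρ a) (ρ.toLinearMap a') := by
    intro a a'
    rw [hopfSMul_mul]
    show ρ (a • a') = ρ a * ρ a'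
    rw [smul_eq_mul, map_mul]
  -- the canonical map as a `k`-linear map, and a `k`-linear section of it
  set can' : A ⊗[↥(coinvariants k H A ρ)] A →ₗ[k] A ⊗[k] H :=
    ((canonicalMap k H A ρ).toLinearMap).restrictScalars k with hcan'def
  have hcan'surj : Function.Surjective can' := fun x => hcan x
  obtain ⟨g, hg⟩ := can'.exists_rightInverse_of_surjective (LinearMap.range_eq_top.mpr hcan'surj)
  set sect : H →ₗ[k] A ⊗[↥(coinvariants k H A ρ)] A := g ∘ₗ TensorProduct.mk k A H 1
    with hsectdef
  have hsect : ∀ h : H, can' (sect h) = (1 : A) ⊗ₜ[k] h := fun h =>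
    LinearMap.congr_fun hg ((1 : A) ⊗ₜ[k] h)
  have hcantmul : ∀ x y : A,
      can' (x ⊗ₜ[↥(coinvariants k H A ρ)] y) = (x ⊗ₜ[k] (1 : H)) * ρ y := by
    intro x y
    show canonicalMap k H A ρ (x ⊗ₜ y) = _
    change (Algebra.ofId A (A ⊗[k] H)) x * ρ y = _
    congr 1
  -- key identities
  have KI_N : ∀ n : N, G0 k H A N φ (rTensor (A ⊗[k] H) ρN
      (lTensor N ((TensorProduct.mk k A H 1) ∘ₗ antipode (R := k)) (ρN n))) = n :=
    KI φ ρN hNcoassoc hNcounit hφ1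
  have KI_A : ∀ a : A, G0 k H A A φ (rTensor (A ⊗[k] H) ρ.toLinearMap
      (lTensor A ((TensorProduct.mk k A H 1) ∘ₗ antipode (R := k)) (ρ.toLinearMap a))) = a :=
    KI φ ρ.toLinearMap hcoassoc hcounit hφ1
  -- `e ∘ Ψ` factors through the canonical map
  have EPsi : ∀ (n' : N) (t : A ⊗[↥(coinvariants k H A ρ)] A),
      eMap k H A N ρ ρN hcompat (PsiMap k H A N ρ ρN φ hφ hcompat hNcoassoc (n' ⊗ₜ[k] t))
        = G0 k H A N φ (rTensor (A ⊗[k] H) ρN (n' ⊗ₜ[k] can' t)) := by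
    intro n' t
    induction t using TensorProduct.induction_on with
    | zero => simp
    | add t1 t2 ih1 ih2 => simp only [TensorProduct.tmul_add, map_add, ih1, ih2]
    | tmul x y =>
        rw [PsiMap_tmul, psinMap_tmul, eMap_tmul, PcFun_coe, hcompat, ← bigHS_tmul, factor,
          rTensor_tmul, hcantmul]
  have hcomp : ∀ w : N ⊗[k] (A ⊗[↥(coinvariants k H A ρ)] A),
      eMap k H A N ρ ρN hcompat (PsiMap k H A N ρ ρN φ hφ hcompat hNcoassoc w)
        = G0 k H A N φ (rTensor (A ⊗[k] H) ρN (lTensor N can' w)) := by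
    intro w
    induction w using TensorProduct.induction_on with
    | zero => simp
    | add w1 w2 ih1 ih2 => simp only [map_add, ih1, ih2]
    | tmul n' t => rw [lTensor_tmul]; exact EPsi n' t
  have hsectS : can' ∘ₗ (sect ∘ₗ antipode (R := k))
      = (TensorProduct.mk k A H 1) ∘ₗ antipode (R := k) := by
    ext h'
    simp only [LinearMap.coe_comp, Function.comp_apply]
    exact hsect (antipode (R := k) h')
  have hsectcomp : ∀ v : N ⊗[k] H,
      lTensor N can' (lTensor N (sect ∘ₗ antipode (R := k)) v)
        = lTensor N ((TensorProduct.mk k A H 1) ∘ₗ antipode (R := k)) v := by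
    intro v
    rw [← LinearMap.comp_apply, ← lTensor_comp, hsectS]
  -- right inverse : e ∘ β = id
  have I1 : ∀ n : N,
      eMap k H A N ρ ρN hcompat (PsiMap k H A N ρ ρN φ hφ hcompat hNcoassoc
        (lTensor N (sect ∘ₗ antipode (R := k)) (ρN n))) = n := by
    intro n
    rw [hcomp, hsectcomp]
    exact KI_N n
  -- the left-inverse computation, on pure tensors, inner part
  have R1 : ∀ (m : ↥(hopfCoinvariants k H A N ρ ρN hcompat)) (a' : A)
      (t : A ⊗[↥(coinvariants k H A ρ)] A),
      psinMap k H A N ρ ρN φ hφ hcompat hNcoassoc (a' • (m : N)) t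
        = m ⊗ₜ[↥(coinvariants k H A ρ)]
            (G0 k H A A φ (rTensor (A ⊗[k] H) ρ.toLinearMap (a' ⊗ₜ[k] can' t))) := by
    intro m a' t
    have hm : ρN (m : N) = (m : N) ⊗ₜ[k] 1 := m.2
    induction t using TensorProduct.induction_on with
    | zero => simp
    | add t1 t2 ih1 ih2 =>
        simp only [map_add, TensorProduct.tmul_add, ih1, ih2]
    | tmul x y =>
        rw [psinMap_tmul]
        have h1 : y • (a' • (m : N)) = (y * a') • (m : N) := smul_smul y a' _
        have h2 : qmap k H A N φ (ρN ((y * a') • (m : N)))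
            = (qmap k H A A φ (ρ.toLinearMap (y * a'))) • (m : N) := by
          rw [hcompat, hm, hopf_smul_coinv, qmap_coinv]
          rfl
        have hb0mem : qmap k H A A φ (ρ.toLinearMap (y * a')) ∈ coinvariants k H A ρ :=
          coinv_P ρ φ ρ.toLinearMap hφ hcompatA hcoassoc (y * a')
        have h3 : PcFun k H A N ρ ρN φ hφ hcompat hNcoassoc (y • (a' • (m : N)))
            = (⟨qmap k H A A φ (ρ.toLinearMap (y * a')), hb0mem⟩ :
                ↥(coinvariants k H A ρ)) • m := Subtype.ext (by
          show qmap k H A N φ (ρN (y • (a' • (m : N)))) = _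
          rw [h1, h2]
          rfl)
        rw [h3, TensorProduct.smul_tmul]
        congr 1
        show (qmap k H A A φ (ρ.toLinearMap (y * a'))) * x = _
        rw [rTensor_tmul, hcantmul]
        have h4 := factor (N := A) φ x (ρ y) (ρ.toLinearMap a')
        rw [← h4, bigHS_tmul, hopfSMul_mul]
        have h5 : (ρ y : A ⊗[k] H) * ρ.toLinearMap a' = ρ.toLinearMap (y * a') := by
          show ρ y * ρ a' = ρ (y * a')
          rw [map_mul]
        rw [h5, smul_eq_mul, mul_comm]
  have Theq : ∀ (m : ↥(hopfCoinvariants k H A N ρ ρN hcompat)) (z : A ⊗[k] H),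
      PsiMap k H A N ρ ρN φ hφ hcompat hNcoassoc
        (lTensor N (sect ∘ₗ antipode (R := k))
          (rTensor H (actionMap k A N ∘ₗ (TensorProduct.mk k A N).flip (m : N)) z))
        = m ⊗ₜ[↥(coinvariants k H A ρ)]
            (G0 k H A A φ (rTensor (A ⊗[k] H) ρ.toLinearMap
              (lTensor A ((TensorProduct.mk k A H 1) ∘ₗ antipode (R := k)) z))) := by
    intro m z
    induction z using TensorProduct.induction_on with
    | zero => simp
    | add z1 z2 ih1 ih2 => simp only [map_add, TensorProduct.tmul_add, ih1, ih2]
    | tmul a' h =>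
        have hstep : rTensor H (actionMap k A N ∘ₗ (TensorProduct.mk k A N).flip (m : N))
            (a' ⊗ₜ[k] h) = (a' • (m : N)) ⊗ₜ[k] h := by
          rw [rTensor_tmul]
          simp only [LinearMap.coe_comp, Function.comp_apply, LinearMap.flip_apply,
            TensorProduct.mk_apply, actionMap_tmul]
        rw [hstep, lTensor_tmul, PsiMap_tmul]
        simp only [LinearMap.coe_comp, Function.comp_apply]
        rw [R1 m a' (sect (antipode (R := k) h))]
        have : can' (sect (antipode (R := k) h)) = (1 : A) ⊗ₜ[k] (antipode (R := k) h) :=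
          hsect _
        rw [this, lTensor_tmul]
        simp only [LinearMap.coe_comp, Function.comp_apply, TensorProduct.mk_apply]
  -- left inverse : β ∘ e = id
  have I2 : ∀ z : ↥(hopfCoinvariants k H A N ρ ρN hcompat) ⊗[↥(coinvariants k H A ρ)] A,
      PsiMap k H A N ρ ρN φ hφ hcompat hNcoassoc
        (lTensor N (sect ∘ₗ antipode (R := k)) (ρN (eMap k H A N ρ ρN hcompat z))) = z := by
    intro z
    induction z using TensorProduct.induction_on with
    | zero => simp
    | add z1 z2 ih1 ih2 => simp only [map_add, ih1, ih2]
    | tmul m a =>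
        have hm : ρN (m : N) = (m : N) ⊗ₜ[k] 1 := m.2
        rw [eMap_tmul, hcompat, hm, hopf_smul_coinv, Theq m (ρ a)]
        exact congrArg (fun u => m ⊗ₜ[↥(coinvariants k H A ρ)] u) (KI_A a)
  refine ⟨eMap k H A N ρ ρN hcompat, fun n a => eMap_tmul k H A N ρ ρN hcompat n a, ?_, ?_⟩
  · intro z1 z2 hzz
    rw [← I2 z1, ← I2 z2, hzz]
  · intro n
    exact ⟨PsiMap k H A N ρ ρN φ hφ hcompat hNcoassoc
      (lTensor N (sect ∘ₗ antipode (R := k)) (ρN n)), I1 n⟩
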